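/- Let H be a set of measurable functions h : ℝ^d → ℝ with |φ'(h(x))| ≤ M for all h ∈ H and all x ∈ ℝ^d. Fix λ, w₁, w₂ ∈ ℝ. Let R̂ : H → ℝ be any function (an empirical estimate of R_linear) such that sup_{h ∈ H} |R_linear(h; λ, w₁, w₂) − R̂(h)| ≤ ε. Let ĥ ∈ H satisfy R̂(ĥ) ≤ R̂(h) for all h ∈ H, and let h* ∈ H satisfy R(h*) ≤ R(h) for all h ∈ H. Then R(ĥ) ≤ R(h*) + 2ε + 2M·Err(w₁, w₂). -/

import Mathlib

open MeasureTheory ProbabilityTheory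

/-- The true Bregman risk `R(h) = E[d_φ(Y, h(X))]`. -/
noncomputable def trueRisk {Ω : Type*} [MeasurableSpace Ω] (μ : Measure Ω) {d : ℕ}
    (X : Ω → (Fin d → ℝ)) (Y : Ω → ℝ) (φ : ℝ → ℝ) (h : (Fin d → ℝ) → ℝ) : ℝ :=
  ∫ ω, (φ (Y ω) - φ (h (X ω)) - (Y ω - h (X ω)) * deriv φ (h (X ω))) ∂μ

/-- The approximated risk `R_linear(h; λ, w₁, w₂)`. -/
noncomputable def linRisk {Ω : Type*} [MeasurableSpace Ω] (μ : Measure Ω) {d : ℕ}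
    (X X' : Ω → (Fin d → ℝ)) (Y Y' : Ω → ℝ) (φ : ℝ → ℝ)
    (lam w1 w2 : ℝ) (h : (Fin d → ℝ) → ℝ) : ℝ :=
  (∫ ω, φ (Y ω) ∂μ)
    - (∫ ω, (φ (h (X ω)) - (h (X ω) - lam) * deriv φ (h (X ω))) ∂μ)
    - (w1 - lam / 2) * (∫ ω, deriv φ (h (if Y' ω ≤ Y ω then X ω else X' ω)) ∂μ)
    - (w2 - lam / 2) * ∫ ω, deriv φ (h (if Y' ω ≤ Y ω then X' ω else X ω)) ∂μ

/-- `Err(w₁, w₂) = E[|Y - 2w₁ F_Y(Y) - 2w₂ (1 - F_Y(Y))|]`. -/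
noncomputable def errW {Ω : Type*} [MeasurableSpace Ω] (μ : Measure Ω)
    (Y : Ω → ℝ) (w1 w2 : ℝ) : ℝ :=
  ∫ ω, |Y ω - 2 * w1 * (μ {ω' | Y ω' ≤ Y ω}).toReal
      - 2 * w2 * (1 - (μ {ω' | Y ω' ≤ Y ω}).toReal)| ∂μ

set_option linter.unusedSectionVars false


section aux

variable {α : Type*} [MeasurableSpace α]

lemma bddInt (ξ : Measure α) [IsProbabilityMeasure ξ] {f : α → ℝ}
    (hf : AEStronglyMeasurable f ξ) {M : ℝ} (hM : ∀ a, |f a| ≤ M) :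
    Integrable f ξ := by
  refine (integrable_const M).mono' hf (Filter.Eventually.of_forall fun a => ?_)
  simpa [Real.norm_eq_abs] using hM a

variable {Ω : Type*} [MeasurableSpace Ω] {μ : Measure Ω} [IsProbabilityMeasure μ] {d : ℕ}
  {X X' : Ω → (Fin d → ℝ)} {Y Y' : Ω → ℝ}

lemma keyA
    (hX : Measurable X) (hY : Measurable Y) (hX' : Measurable X') (hY' : Measurable Y')
    (hindep : IndepFun (fun ω => (X ω, Y ω)) (fun ω => (X' ω, Y' ω)) μ)
    (hident : μ.map (fun ω => (X ω, Y ω)) = μ.map (fun ω => (X' ω, Y' ω)))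
    (hatomless : ∀ t : ℝ, μ {ω | Y ω = t} = 0)
    (g : (Fin d → ℝ) → ℝ) (hg : Measurable g) (M : ℝ) (hgM : ∀ x, |g x| ≤ M) :
    ∫ ω, g (if Y' ω ≤ Y ω then X ω else X' ω) ∂μ
      = 2 * ∫ ω, g (X ω) * (μ {ω' | Y ω' ≤ Y ω}).toReal ∂μ := by
  have hm1 : Measurable (fun ω => (X ω, Y ω)) := hX.prodMk hY
  have hm2 : Measurable (fun ω => (X' ω, Y' ω)) := hX'.prodMk hY'
  set ν : Measure ((Fin d → ℝ) × ℝ) := μ.map (fun ω => (X ω, Y ω)) with hνdef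
  have hνprob : IsProbabilityMeasure ν := Measure.isProbabilityMeasure_map hm1.aemeasurable
  have hprod : μ.map (fun ω => ((X ω, Y ω), (X' ω, Y' ω))) = ν.prod ν := by
    rw [(indepFun_iff_map_prod_eq_prod_map_map hm1.aemeasurable hm2.aemeasurable).mp hindep,
      ← hident]
  -- CDF facts
  set F : ℝ → ℝ := fun t => (μ {ω | Y ω ≤ t}).toReal with hFdef
  have hFmeas : Measurable F := by
    refine Monotone.measurable fun a b hab => ?_
    exact ENNReal.toReal_mono (measure_ne_top μ _)
      (measure_mono fun ω hω => le_trans hω hab)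
  have hsetle : ∀ t : ℝ, MeasurableSet {q : (Fin d → ℝ) × ℝ | q.2 ≤ t} := fun t =>
    measurable_snd measurableSet_Iic
  have hsetlt : ∀ t : ℝ, MeasurableSet {q : (Fin d → ℝ) × ℝ | q.2 < t} := fun t =>
    measurable_snd measurableSet_Iio
  have hFν : ∀ t : ℝ, ν {q : (Fin d → ℝ) × ℝ | q.2 ≤ t} = μ {ω | Y ω ≤ t} := fun t => by
    rw [hνdef, Measure.map_apply hm1 (hsetle t)]; rfl
  have hlt : ∀ t : ℝ, μ {ω | Y ω < t} = μ {ω | Y ω ≤ t} := by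
    intro t
    refine le_antisymm (measure_mono fun ω (h : Y ω < t) => le_of_lt h) ?_
    have hsub : {ω | Y ω ≤ t} ⊆ {ω | Y ω < t} ∪ {ω | Y ω = t} := fun ω (h : Y ω ≤ t) =>
      (lt_or_eq_of_le h : Y ω < t ∨ Y ω = t)
    calc μ {ω | Y ω ≤ t} ≤ μ ({ω | Y ω < t} ∪ {ω | Y ω = t}) := measure_mono hsub
      _ ≤ μ {ω | Y ω < t} + μ {ω | Y ω = t} := measure_union_le _ _
      _ = μ {ω | Y ω < t} := by rw [hatomless t, add_zero]
  have hFν' : ∀ t : ℝ, ν {q : (Fin d → ℝ) × ℝ | q.2 < t} = μ {ω | Y ω ≤ t} := fun t => by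
    rw [hνdef, Measure.map_apply hm1 (hsetlt t)]
    exact hlt t
  -- the product-space function
  set M' : ℝ := max M 0 with hM'def
  have hgM' : ∀ x, |g x| ≤ M' := fun x => le_trans (hgM x) (le_max_left _ _)
  set G1 : ((Fin d → ℝ) × ℝ) × ((Fin d → ℝ) × ℝ) → ℝ :=
    fun pq => if pq.2.2 ≤ pq.1.2 then g pq.1.1 else 0 with hG1def
  set G2 : ((Fin d → ℝ) × ℝ) × ((Fin d → ℝ) × ℝ) → ℝ :=
    fun pq => if pq.2.2 ≤ pq.1.2 then 0 else g pq.2.1 with hG2def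
  have hsetG : MeasurableSet {pq : ((Fin d → ℝ) × ℝ) × ((Fin d → ℝ) × ℝ) | pq.2.2 ≤ pq.1.2} :=
    measurableSet_le (measurable_snd.comp measurable_snd) (measurable_snd.comp measurable_fst)
  have hG1meas : Measurable G1 :=
    Measurable.ite hsetG (hg.comp (measurable_fst.comp measurable_fst)) measurable_const
  have hG2meas : Measurable G2 :=
    Measurable.ite hsetG measurable_const (hg.comp (measurable_fst.comp measurable_snd))
  have hG1bd : ∀ pq, |G1 pq| ≤ M' := by
    intro pq; rw [hG1def]; dsimp only
    split <;> simp [hgM', le_max_right M 0] <;> exact le_max_right M 0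
  have hG2bd : ∀ pq, |G2 pq| ≤ M' := by
    intro pq; rw [hG2def]; dsimp only
    split <;> simp [hgM', le_max_right M 0] <;> exact le_max_right M 0
  have iG1 : Integrable G1 (ν.prod ν) := bddInt _ hG1meas.aestronglyMeasurable hG1bd
  have iG2 : Integrable G2 (ν.prod ν) := bddInt _ hG2meas.aestronglyMeasurable hG2bd
  -- step 1 : pull back to product measure
  have hGmeas : Measurable (fun pq : ((Fin d → ℝ) × ℝ) × ((Fin d → ℝ) × ℝ) =>
      if pq.2.2 ≤ pq.1.2 then g pq.1.1 else g pq.2.1) :=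
    Measurable.ite hsetG (hg.comp (measurable_fst.comp measurable_fst))
      (hg.comp (measurable_fst.comp measurable_snd))
  have step1 : ∫ ω, g (if Y' ω ≤ Y ω then X ω else X' ω) ∂μ
      = ∫ pq, (if pq.2.2 ≤ pq.1.2 then g pq.1.1 else g pq.2.1) ∂(ν.prod ν) := by
    rw [← hprod, integral_map (hm1.prodMk hm2).aemeasurable hGmeas.aestronglyMeasurable]
    congr 1
    funext ω
    by_cases h : Y' ω ≤ Y ω <;> simp [h]
  have hsplit : (fun pq : ((Fin d → ℝ) × ℝ) × ((Fin d → ℝ) × ℝ) =>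
      if pq.2.2 ≤ pq.1.2 then g pq.1.1 else g pq.2.1) = fun pq => G1 pq + G2 pq := by
    funext pq
    by_cases h : pq.2.2 ≤ pq.1.2 <;> simp [hG1def, hG2def, h]
  -- first term
  have hterm1 : ∫ pq, G1 pq ∂(ν.prod ν) = ∫ ω, g (X ω) * F (Y ω) ∂μ := by
    rw [integral_prod _ iG1]
    have hinner : ∀ p : (Fin d → ℝ) × ℝ,
        ∫ q, G1 (p, q) ∂ν = g p.1 * F p.2 := by
      intro p
      have : (fun q : (Fin d → ℝ) × ℝ => G1 (p, q))
          = Set.indicator {q : (Fin d → ℝ) × ℝ | q.2 ≤ p.2} (fun _ => g p.1) := by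
        funext q
        by_cases h : q.2 ≤ p.2 <;> simp [hG1def, h, Set.indicator]
      rw [this, integral_indicator (hsetle p.2), setIntegral_const, measureReal_def, hFν, smul_eq_mul, mul_comm]
    rw [show (fun p => ∫ q, G1 (p, q) ∂ν) = fun p : (Fin d → ℝ) × ℝ => g p.1 * F p.2 from
      funext hinner]
    rw [hνdef]
    exact integral_map hm1.aemeasurable
      (show Measurable fun p : (Fin d → ℝ) × ℝ => g p.1 * F p.2 from
        (hg.comp measurable_fst).mul (hFmeas.comp measurable_snd)).aestronglyMeasurable
  -- second term
  have hterm2 : ∫ pq, G2 pq ∂(ν.prod ν) = ∫ ω, g (X ω) * F (Y ω) ∂μ := by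
    rw [integral_prod_symm _ iG2]
    have hinner : ∀ q : (Fin d → ℝ) × ℝ,
        ∫ p, G2 (p, q) ∂ν = g q.1 * F q.2 := by
      intro q
      have : (fun p : (Fin d → ℝ) × ℝ => G2 (p, q))
          = Set.indicator {p : (Fin d → ℝ) × ℝ | p.2 < q.2} (fun _ => g q.1) := by
        funext p
        by_cases h : q.2 ≤ p.2
        · simp [hG2def, h, Set.indicator, not_lt.mpr h]
        · simp [hG2def, h, Set.indicator, lt_of_not_ge h]
      rw [this, integral_indicator (hsetlt q.2), setIntegral_const, measureReal_def, hFν', smul_eq_mul, mul_comm]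
    rw [show (fun q => ∫ p, G2 (p, q) ∂ν) = fun q : (Fin d → ℝ) × ℝ => g q.1 * F q.2 from
      funext hinner]
    rw [hνdef]
    exact integral_map hm1.aemeasurable
      (show Measurable fun p : (Fin d → ℝ) × ℝ => g p.1 * F p.2 from
        (hg.comp measurable_fst).mul (hFmeas.comp measurable_snd)).aestronglyMeasurable
  rw [step1, hsplit, integral_add iG1 iG2, hterm1, hterm2]
  ring

end aux

section aux2

variable {Ω : Type*} [MeasurableSpace Ω] {μ : Measure Ω} [IsProbabilityMeasure μ] {d : ℕ}
  {X X' : Ω → (Fin d → ℝ)} {Y Y' : Ω → ℝ}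

lemma intMulBdd {f b : Ω → ℝ} (hf : Integrable f μ) (hb : AEStronglyMeasurable b μ) {C : ℝ}
    (hC : ∀ ω, |b ω| ≤ C) : Integrable (fun ω => f ω * b ω) μ := by
  have := hf.bdd_mul hb (c := C) (Filter.Eventually.of_forall fun x => by simpa [Real.norm_eq_abs] using hC x)
  exact this.congr (Filter.Eventually.of_forall fun ω => mul_comm _ _)

lemma Fle1 (t : ℝ) : (μ {ω | Y ω ≤ t}).toReal ≤ 1 := by
  have := ENNReal.toReal_mono (measure_ne_top μ Set.univ)
    (measure_mono (Set.subset_univ {ω | Y ω ≤ t}))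
  simpa using this

lemma keyB
    (hX : Measurable X) (hY : Measurable Y) (hX' : Measurable X') (hY' : Measurable Y')
    (hindep : IndepFun (fun ω => (X ω, Y ω)) (fun ω => (X' ω, Y' ω)) μ)
    (hident : μ.map (fun ω => (X ω, Y ω)) = μ.map (fun ω => (X' ω, Y' ω)))
    (hatomless : ∀ t : ℝ, μ {ω | Y ω = t} = 0)
    (g : (Fin d → ℝ) → ℝ) (hg : Measurable g) (M : ℝ) (hgM : ∀ x, |g x| ≤ M) :
    ∫ ω, g (if Y' ω ≤ Y ω then X' ω else X ω) ∂μ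
      = 2 * ∫ ω, g (X ω) * (1 - (μ {ω' | Y ω' ≤ Y ω}).toReal) ∂μ := by
  have hm1 : Measurable (fun ω => (X ω, Y ω)) := hX.prodMk hY
  have hm2 : Measurable (fun ω => (X' ω, Y' ω)) := hX'.prodMk hY'
  have hFmeas : Measurable (fun t : ℝ => (μ {ω | Y ω ≤ t}).toReal) := by
    refine Monotone.measurable fun a b hab => ?_
    exact ENNReal.toReal_mono (measure_ne_top μ _) (measure_mono fun ω hω => le_trans hω hab)
  set M' : ℝ := max M 0 with hM'def
  have hgM' : ∀ x, |g x| ≤ M' := fun x => le_trans (hgM x) (le_max_left _ _)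
  have hM'0 : (0 : ℝ) ≤ M' := le_max_right _ _
  have igX : Integrable (fun ω => g (X ω)) μ :=
    bddInt μ (hg.comp hX).aestronglyMeasurable (fun ω => hgM' (X ω))
  have igX' : Integrable (fun ω => g (X' ω)) μ :=
    bddInt μ (hg.comp hX').aestronglyMeasurable (fun ω => hgM' (X' ω))
  have iplus : Integrable (fun ω => g (if Y' ω ≤ Y ω then X ω else X' ω)) μ := by
    have hmeas : Measurable fun ω => g (if Y' ω ≤ Y ω then X ω else X' ω) := by
      have : (fun ω => g (if Y' ω ≤ Y ω then X ω else X' ω))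
          = fun ω => if Y' ω ≤ Y ω then g (X ω) else g (X' ω) :=
        funext fun ω => by by_cases h : Y' ω ≤ Y ω <;> simp [h]
      rw [this]
      exact Measurable.ite (measurableSet_le hY' hY) (hg.comp hX) (hg.comp hX')
    exact bddInt μ hmeas.aestronglyMeasurable (fun ω => hgM' _)
  have igXF : Integrable (fun ω => g (X ω) * (μ {ω' | Y ω' ≤ Y ω}).toReal) μ := by
    refine bddInt μ ((hg.comp hX).mul (hFmeas.comp hY)).aestronglyMeasurable (M := M') (fun ω => ?_)
    calc |g (X ω) * (μ {ω' | Y ω' ≤ Y ω}).toReal|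
        = |g (X ω)| * |(μ {ω' | Y ω' ≤ Y ω}).toReal| := abs_mul _ _
      _ ≤ M' * 1 := by
          refine mul_le_mul (hgM' _) ?_ (abs_nonneg _) hM'0
          rw [abs_of_nonneg ENNReal.toReal_nonneg]; exact Fle1 _
      _ = M' := mul_one _
  have hXX' : ∫ ω, g (X' ω) ∂μ = ∫ ω, g (X ω) ∂μ := by
    have hgfst : Measurable fun p : (Fin d → ℝ) × ℝ => g p.1 := hg.comp measurable_fst
    rw [show ∫ ω, g (X ω) ∂μ
        = ∫ p, (fun p : (Fin d → ℝ) × ℝ => g p.1) p ∂(μ.map (fun ω => (X ω, Y ω))) from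
      (integral_map hm1.aemeasurable hgfst.aestronglyMeasurable).symm, hident,
      integral_map hm2.aemeasurable hgfst.aestronglyMeasurable]
  have hkey := keyA hX hY hX' hY' hindep hident hatomless g hg M hgM
  have hpoint : (fun ω => g (if Y' ω ≤ Y ω then X' ω else X ω))
      = fun ω => g (X ω) + g (X' ω) - g (if Y' ω ≤ Y ω then X ω else X' ω) :=
    funext fun ω => by by_cases h : Y' ω ≤ Y ω <;> simp [h] <;> ring
  have iadd : Integrable (fun ω => g (X ω) + g (X' ω)) μ := igX.add igX'
  rw [hpoint, integral_sub iadd iplus, integral_add igX igX', hXX', hkey]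
  have hrw : ∫ ω, g (X ω) * (1 - (μ {ω' | Y ω' ≤ Y ω}).toReal) ∂μ
      = ∫ ω, g (X ω) ∂μ - ∫ ω, g (X ω) * (μ {ω' | Y ω' ≤ Y ω}).toReal ∂μ := by
    rw [← integral_sub igX igXF]
    congr 1; funext ω; ring
  rw [hrw]; ring

end aux2

section aux3

variable {Ω : Type*} [MeasurableSpace Ω] {μ : Measure Ω} [IsProbabilityMeasure μ] {d : ℕ}
  {X X' : Ω → (Fin d → ℝ)} {Y Y' : Ω → ℝ}

lemma risk_close
    (hX : Measurable X) (hY : Measurable Y) (hX' : Measurable X') (hY' : Measurable Y')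
    (hindep : IndepFun (fun ω => (X ω, Y ω)) (fun ω => (X' ω, Y' ω)) μ)
    (hident : μ.map (fun ω => (X ω, Y ω)) = μ.map (fun ω => (X' ω, Y' ω)))
    (hatomless : ∀ t : ℝ, μ {ω | Y ω = t} = 0)
    (hYint : Integrable Y μ)
    (φ : ℝ → ℝ)
    (hφY : Integrable (fun ω => φ (Y ω)) μ)
    {h : (Fin d → ℝ) → ℝ} (hmeas : Measurable h) {M : ℝ}
    (hM : ∀ x, |deriv φ (h x)| ≤ M)
    (hint1 : Integrable (fun ω => φ (h (X ω))) μ)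
    (hint2 : Integrable (fun ω => h (X ω) * deriv φ (h (X ω))) μ)
    (lam w1 w2 : ℝ) :
    |trueRisk μ X Y φ h - linRisk μ X X' Y Y' φ lam w1 w2 h|
      ≤ M * errW μ Y w1 w2 := by
  have hM0 : (0 : ℝ) ≤ M := le_trans (abs_nonneg _) (hM fun _ => 0)
  set D : ℝ → ℝ := deriv φ with hD
  have hDmeas : Measurable D := measurable_deriv φ
  set F : ℝ → ℝ := fun t => (μ {ω | Y ω ≤ t}).toReal with hF
  have hFmeas : Measurable F := by
    refine Monotone.measurable fun a b hab => ?_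
    exact ENNReal.toReal_mono (measure_ne_top μ _) (measure_mono fun ω hω => le_trans hω hab)
  have hF0 : ∀ t, 0 ≤ F t := fun t => ENNReal.toReal_nonneg
  have hF1 : ∀ t, F t ≤ 1 := fun t => Fle1 t
  have hg : Measurable fun x => D (h x) := hDmeas.comp hmeas
  -- integrabilities
  have iD : Integrable (fun ω => D (h (X ω))) μ :=
    bddInt μ (hg.comp hX).aestronglyMeasurable (fun ω => hM (X ω))
  have iDF : Integrable (fun ω => D (h (X ω)) * F (Y ω)) μ := by
    refine bddInt μ ((hg.comp hX).mul (hFmeas.comp hY)).aestronglyMeasurable (M := M)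
      (fun ω => ?_)
    calc |D (h (X ω)) * F (Y ω)| = |D (h (X ω))| * |F (Y ω)| := abs_mul _ _
      _ ≤ M * 1 := by
          refine mul_le_mul (hM _) ?_ (abs_nonneg _) hM0
          rw [abs_of_nonneg (hF0 _)]; exact hF1 _
      _ = M := mul_one _
  have iDF' : Integrable (fun ω => D (h (X ω)) * (1 - F (Y ω))) μ := by
    refine bddInt μ ((hg.comp hX).mul
      (measurable_const.sub (hFmeas.comp hY))).aestronglyMeasurable (M := M) (fun ω => ?_)
    calc |D (h (X ω)) * (1 - F (Y ω))| = |D (h (X ω))| * |1 - F (Y ω)| := abs_mul _ _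
      _ ≤ M * 1 := by
          refine mul_le_mul (hM _) ?_ (abs_nonneg _) hM0
          rw [abs_of_nonneg (by linarith [hF1 (Y ω)])]
          linarith [hF0 (Y ω)]
      _ = M := mul_one _
  have iYD : Integrable (fun ω => Y ω * D (h (X ω))) μ :=
    intMulBdd hYint (hg.comp hX).aestronglyMeasurable (C := M) (fun ω => hM (X ω))
  -- the function u
  set u : Ω → ℝ := fun ω => Y ω - 2 * w1 * F (Y ω) - 2 * w2 * (1 - F (Y ω)) with hu
  have humeas : AEStronglyMeasurable u μ := by
    refine Measurable.aestronglyMeasurable ?_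
    exact (hY.sub (measurable_const.mul (hFmeas.comp hY))).sub
      (measurable_const.mul (measurable_const.sub (hFmeas.comp hY)))
  have iu : Integrable u μ := by
    refine Integrable.sub (Integrable.sub hYint ?_) ?_
    · refine bddInt μ (measurable_const.mul (hFmeas.comp hY)).aestronglyMeasurable
        (M := |2 * w1|) (fun ω => ?_)
      rw [abs_mul]
      calc |2 * w1| * |F (Y ω)| ≤ |2 * w1| * 1 := by
            refine mul_le_mul_of_nonneg_left ?_ (abs_nonneg _)
            rw [abs_of_nonneg (hF0 _)]; exact hF1 _
        _ = |2 * w1| := mul_one _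
    · refine bddInt μ (measurable_const.mul
        (measurable_const.sub (hFmeas.comp hY))).aestronglyMeasurable
        (M := |2 * w2|) (fun ω => ?_)
      rw [abs_mul]
      calc |2 * w2| * |1 - F (Y ω)| ≤ |2 * w2| * 1 := by
            refine mul_le_mul_of_nonneg_left ?_ (abs_nonneg _)
            rw [abs_of_nonneg (by linarith [hF1 (Y ω)])]
            linarith [hF0 (Y ω)]
        _ = |2 * w2| := mul_one _
  have iuD : Integrable (fun ω => u ω * D (h (X ω))) μ :=
    intMulBdd iu (hg.comp hX).aestronglyMeasurable (C := M) (fun ω => hM (X ω))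
  -- splitting the risks
  have e1 : trueRisk μ X Y φ h
      = (∫ ω, φ (Y ω) ∂μ) - (∫ ω, φ (h (X ω)) ∂μ)
        - (∫ ω, Y ω * D (h (X ω)) ∂μ) + (∫ ω, h (X ω) * D (h (X ω)) ∂μ) := by
    unfold trueRisk
    rw [show (fun ω => φ (Y ω) - φ (h (X ω)) - (Y ω - h (X ω)) * deriv φ (h (X ω)))
        = fun ω => (φ (Y ω) - φ (h (X ω)) - Y ω * D (h (X ω))) + h (X ω) * D (h (X ω)) from
      funext fun ω => by rw [hD]; ring]
    have i1 : Integrable (fun ω => φ (Y ω) - φ (h (X ω))) μ := hφY.sub hint1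
    have i2 : Integrable (fun ω => φ (Y ω) - φ (h (X ω)) - Y ω * D (h (X ω))) μ := i1.sub iYD
    rw [integral_add i2 hint2, integral_sub i1 iYD, integral_sub hφY hint1]
  have e2 : ∫ ω, (φ (h (X ω)) - (h (X ω) - lam) * deriv φ (h (X ω))) ∂μ
      = (∫ ω, φ (h (X ω)) ∂μ) - (∫ ω, h (X ω) * D (h (X ω)) ∂μ)
        + lam * (∫ ω, D (h (X ω)) ∂μ) := by
    rw [show (fun ω => φ (h (X ω)) - (h (X ω) - lam) * deriv φ (h (X ω)))
        = fun ω => (φ (h (X ω)) - h (X ω) * D (h (X ω))) + lam * D (h (X ω)) from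
      funext fun ω => by rw [hD]; ring]
    have i1 : Integrable (fun ω => φ (h (X ω)) - h (X ω) * D (h (X ω))) μ := hint1.sub hint2
    rw [integral_add i1 (iD.const_mul lam), integral_sub hint1 hint2, integral_const_mul]
  have e3 : ∫ ω, deriv φ (h (if Y' ω ≤ Y ω then X ω else X' ω)) ∂μ
      = 2 * ∫ ω, D (h (X ω)) * F (Y ω) ∂μ :=
    keyA hX hY hX' hY' hindep hident hatomless (fun x => D (h x)) hg M (fun x => hM x)
  have e4 : ∫ ω, deriv φ (h (if Y' ω ≤ Y ω then X' ω else X ω)) ∂μ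
      = 2 * ∫ ω, D (h (X ω)) * (1 - F (Y ω)) ∂μ :=
    keyB hX hY hX' hY' hindep hident hatomless (fun x => D (h x)) hg M (fun x => hM x)
  have eDc : ∫ ω, D (h (X ω)) ∂μ
      = (∫ ω, D (h (X ω)) * F (Y ω) ∂μ) + ∫ ω, D (h (X ω)) * (1 - F (Y ω)) ∂μ := by
    rw [← integral_add iDF iDF']
    congr 1; funext ω; ring
  have eu : ∫ ω, u ω * D (h (X ω)) ∂μ
      = (∫ ω, Y ω * D (h (X ω)) ∂μ) - 2 * w1 * (∫ ω, D (h (X ω)) * F (Y ω) ∂μ)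
        - 2 * w2 * (∫ ω, D (h (X ω)) * (1 - F (Y ω)) ∂μ) := by
    rw [show (fun ω => u ω * D (h (X ω)))
        = fun ω => (Y ω * D (h (X ω)) - (2 * w1) * (D (h (X ω)) * F (Y ω)))
            - (2 * w2) * (D (h (X ω)) * (1 - F (Y ω))) from
      funext fun ω => by rw [hu]; ring]
    have i1 : Integrable (fun ω => Y ω * D (h (X ω)) - (2 * w1) * (D (h (X ω)) * F (Y ω))) μ :=
      iYD.sub (iDF.const_mul (2 * w1))
    rw [integral_sub i1 (iDF'.const_mul (2 * w2)), integral_sub iYD (iDF.const_mul (2 * w1)),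
      integral_const_mul, integral_const_mul]
  have hdiff : trueRisk μ X Y φ h - linRisk μ X X' Y Y' φ lam w1 w2 h
      = -(∫ ω, u ω * D (h (X ω)) ∂μ) := by
    unfold linRisk
    rw [e1, e2, e3, e4, eu, eDc]
    ring
  have herr : errW μ Y w1 w2 = ∫ ω, |u ω| ∂μ := rfl
  rw [hdiff, abs_neg, herr]
  calc |∫ ω, u ω * D (h (X ω)) ∂μ| ≤ ∫ ω, |u ω| * |D (h (X ω))| ∂μ := by
        simpa [Real.norm_eq_abs, abs_mul] using
          norm_integral_le_integral_norm (μ := μ) (fun ω => u ω * D (h (X ω)))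
    _ ≤ ∫ ω, |u ω| * M ∂μ := by
        refine integral_mono
          (iuD.abs.congr (Filter.Eventually.of_forall fun ω => abs_mul _ _))
          (iu.abs.mul_const M) (fun ω => ?_)
        exact mul_le_mul_of_nonneg_left (hM _) (abs_nonneg _)
    _ = M * ∫ ω, |u ω| ∂μ := by rw [integral_mul_const]; ring

end aux3

/-- If `R̂` approximates `R_linear` uniformly on `H` up to `ε`, `ĥ` is an
empirical risk minimizer of `R̂` over `H`, and `h*` minimizes the true risk `R` over `H`,
then `R(ĥ) ≤ R(h*) + 2ε + 2M·Err(w₁, w₂)`. -/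
theorem stmt_8
    {Ω : Type*} [MeasurableSpace Ω] {μ : Measure Ω} [IsProbabilityMeasure μ]
    {d : ℕ} {X X' : Ω → (Fin d → ℝ)} {Y Y' : Ω → ℝ}
    (hX : Measurable X) (hY : Measurable Y) (hX' : Measurable X') (hY' : Measurable Y')
    (hindep : IndepFun (fun ω => (X ω, Y ω)) (fun ω => (X' ω, Y' ω)) μ)
    (hident : μ.map (fun ω => (X ω, Y ω)) = μ.map (fun ω => (X' ω, Y' ω)))
    (hatomless : ∀ t : ℝ, μ {ω | Y ω = t} = 0)
    (hYint : Integrable Y μ)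
    (φ : ℝ → ℝ) (hφdiff : Differentiable ℝ φ) (hφconv : ConvexOn ℝ Set.univ φ)
    (hφY : Integrable (fun ω => φ (Y ω)) μ)
    (H : Set ((Fin d → ℝ) → ℝ)) (M : ℝ)
    (hHmeas : ∀ h ∈ H, Measurable h)
    (hHM : ∀ h ∈ H, ∀ x, |deriv φ (h x)| ≤ M)
    (hHint1 : ∀ h ∈ H, Integrable (fun ω => φ (h (X ω))) μ)
    (hHint2 : ∀ h ∈ H, Integrable (fun ω => h (X ω) * deriv φ (h (X ω))) μ)
    (lam w1 w2 ε : ℝ)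
    (Rhat : ((Fin d → ℝ) → ℝ) → ℝ)
    (hsup : ∀ h ∈ H, |linRisk μ X X' Y Y' φ lam w1 w2 h - Rhat h| ≤ ε)
    (hhat hstar : (Fin d → ℝ) → ℝ)
    (hhatH : hhat ∈ H) (hhatmin : ∀ h ∈ H, Rhat hhat ≤ Rhat h)
    (hstarH : hstar ∈ H)
    (hstarmin : ∀ h ∈ H, trueRisk μ X Y φ hstar ≤ trueRisk μ X Y φ h) :
    trueRisk μ X Y φ hhat
      ≤ trueRisk μ X Y φ hstar + 2 * ε + 2 * M * errW μ Y w1 w2 := by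
  have hclose : ∀ h ∈ H,
      |trueRisk μ X Y φ h - linRisk μ X X' Y Y' φ lam w1 w2 h| ≤ M * errW μ Y w1 w2 :=
    fun h hH => risk_close hX hY hX' hY' hindep hident hatomless hYint φ hφY
      (hHmeas h hH) (hHM h hH) (hHint1 h hH) (hHint2 h hH) lam w1 w2
  have h1 := abs_le.mp (hclose hhat hhatH)
  have h2 := abs_le.mp (hclose hstar hstarH)
  have h3 := abs_le.mp (hsup hhat hhatH)
  have h4 := abs_le.mp (hsup hstar hstarH)
  have h5 := hhatmin hstar hstarH
  linarith [h1.1, h1.2, h2.1, h2.2, h3.1, h3.2, h4.1, h4.2]
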